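/- arXiv:1806.02988 — 4 statements merged into one kernel-verified Lean document; each statement's English description precedes it below -/
import Mathlib

section
/- Let σ(x) = 1/(1+e^{-x}) be the sigmoid function, let α ∈ ℝ, let τ > 0, and let U be uniformly distributed on (0,1). Define G(α,τ) = σ((α + log U − log(1−U))/τ). Then for every ε ∈ (0,1), P(G(α,τ) ≥ 1−ε) = σ(α − τ·log(1/ε − 1)). -/
open MeasureTheory Real

/-- The gsigmoid function σ(x) = 1/(1+e^{-x}). -/
noncomputable def gsigmoid (x : ℝ) : ℝ := 1 / (1 + Real.exp (-x))

/-- For U uniform on (0,1) and G(α,τ) = σ((α + log U − log(1−U))/τ),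
    for every ε ∈ (0,1), P(G(α,τ) ≥ 1−ε) = σ(α − τ·log(1/ε − 1)). -/
theorem gumbel_upper_tail_eq (α τ ε : ℝ) (hτ : 0 < τ) (hε : ε ∈ Set.Ioo (0:ℝ) 1) :
    (volume.restrict (Set.Ioo (0:ℝ) 1))
      {u : ℝ | 1 - ε ≤ gsigmoid ((α + Real.log u - Real.log (1 - u)) / τ)}
      = ENNReal.ofReal (gsigmoid (α - τ * Real.log (1/ε - 1))) := by
  obtain ⟨hε0, hε1⟩ := hε
  have h1ε : 0 < 1 - ε := by linarith
  set s : ℝ := α - τ * Real.log (1/ε - 1) with hs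
  set A : ℝ := Real.exp (-s) with hA
  have hApos : 0 < A := Real.exp_pos _
  set c : ℝ := A / (1 + A) with hc
  have hcpos : 0 < c := by positivity
  have hc1 : c < 1 := by
    rw [hc, div_lt_one (by positivity)]; linarith
  have hsig : gsigmoid s = 1 - c := by
    rw [hc]; unfold gsigmoid; rw [← hA]; field_simp; ring
  have hεq : (1:ℝ)/ε - 1 = (1-ε)/ε := by field_simp
  have hlogε : Real.log (1/ε - 1) = Real.log (1-ε) - Real.log ε := by
    rw [hεq, Real.log_div h1ε.ne' hε0.ne']
  have key : ∀ u : ℝ, 0 < u → u < 1 →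
      (1 - ε ≤ gsigmoid ((α + Real.log u - Real.log (1 - u)) / τ) ↔ c ≤ u) := by
    intro u hu0 hu1
    have h1u : 0 < 1 - u := by linarith
    set X : ℝ := (α + Real.log u - Real.log (1 - u)) / τ with hX
    have hd : 0 < 1 + Real.exp (-X) := by positivity
    unfold gsigmoid
    rw [le_div_iff₀ hd]
    have step1 : (1 - ε) * (1 + Real.exp (-X)) ≤ 1 ↔ Real.exp (-X) ≤ ε / (1-ε) := by
      rw [le_div_iff₀ h1ε]
      constructor <;> intro h <;> nlinarith
    rw [step1, show ε/(1-ε) = Real.exp (Real.log (ε/(1-ε))) from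
        (Real.exp_log (by positivity)).symm, Real.exp_le_exp]
    have hlogε' : Real.log (ε/(1-ε)) = Real.log ε - Real.log (1-ε) :=
      Real.log_div hε0.ne' h1ε.ne'
    have step2 : -X ≤ Real.log (ε/(1-ε)) ↔ -s ≤ Real.log u - Real.log (1-u) := by
      rw [hlogε', neg_le, hX, le_div_iff₀ hτ, hs, hlogε]
      constructor <;> intro h <;> nlinarith [h]
    rw [step2, show Real.log u - Real.log (1-u) = Real.log (u/(1-u)) from
        (Real.log_div hu0.ne' h1u.ne').symm,
      ← Real.exp_le_exp, Real.exp_log (by positivity), ← hA]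
    rw [hc, div_le_iff₀ (by positivity : (0:ℝ) < 1 + A), le_div_iff₀ h1u]
    constructor <;> intro h <;> nlinarith
  have hset : {u : ℝ | 1 - ε ≤ gsigmoid ((α + Real.log u - Real.log (1 - u)) / τ)}
      ∩ Set.Ioo (0:ℝ) 1 = Set.Ico c 1 := by
    ext u
    simp only [Set.mem_inter_iff, Set.mem_setOf_eq, Set.mem_Ioo, Set.mem_Ico]
    constructor
    · rintro ⟨hP, hu0, hu1⟩
      exact ⟨(key u hu0 hu1).mp hP, hu1⟩
    · rintro ⟨hcu, hu1⟩
      have hu0 : 0 < u := lt_of_lt_of_le hcpos hcu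
      exact ⟨(key u hu0 hu1).mpr hcu, hu0, hu1⟩
  rw [Measure.restrict_apply' measurableSet_Ioo, hset, Real.volume_Ico, hsig]
end

section
/- Let σ(x) = 1/(1+e^{-x}) be the sigmoid function, let α ∈ ℝ, let τ > 0, and let U be uniformly distributed on (0,1). Define G(α,τ) = σ((α + log U − log(1−U))/τ). Then for every ε ∈ (0,1/2), σ(α) − (τ/4)·log(1/ε) ≤ P(G(α,τ) ≥ 1−ε) ≤ σ(α). -/
open MeasureTheory Real

/-- The sigmoid function σ(x) = 1/(1+e^{-x}). -/
noncomputable def sigmoid (x : ℝ) : ℝ := 1 / (1 + Real.exp (-x))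

lemma one_add_exp_pos (x : ℝ) : 0 < 1 + Real.exp (-x) := by positivity

lemma hasDerivAt_sigmoid (x : ℝ) :
    HasDerivAt _root_.sigmoid (Real.exp (-x) / (1 + Real.exp (-x)) ^ 2) x := by
  have h : HasDerivAt (fun y : ℝ => 1 + Real.exp (-y)) (-Real.exp (-x)) x := by
    have := (Real.hasDerivAt_exp (-x)).comp x (hasDerivAt_neg x)
    simpa using (this.const_add 1)
  have key := h.inv (ne_of_gt (one_add_exp_pos x))
  have hfe : _root_.sigmoid = fun y => (1 + Real.exp (-y))⁻¹ := by
    funext y; simp [_root_.sigmoid]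
  rw [hfe]
  rw [neg_neg] at key
  exact key

lemma sigmoid_deriv_bound (x : ℝ) :
    Real.exp (-x) / (1 + Real.exp (-x)) ^ 2 ≤ 1 / 4 := by
  rw [div_le_div_iff₀ (by positivity) (by norm_num)]
  nlinarith [Real.exp_pos (-x), sq_nonneg (1 - Real.exp (-x))]

lemma sigmoid_lip {a b : ℝ} (h : b ≤ a) : _root_.sigmoid a - _root_.sigmoid b ≤ (a - b) / 4 := by
  have key := norm_image_sub_le_of_norm_deriv_le_segment'
    (f := _root_.sigmoid) (f' := fun y => Real.exp (-y) / (1 + Real.exp (-y)) ^ 2)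
    (a := b) (b := a) (C := 1 / 4)
    (fun x _ => (_root_.hasDerivAt_sigmoid x).hasDerivWithinAt)
    (fun x _ => by
      rw [Real.norm_eq_abs, abs_of_nonneg (by positivity)]
      exact sigmoid_deriv_bound x)
    a (Set.right_mem_Icc.2 h)
  have := le_trans (le_abs_self _) (by simpa [Real.norm_eq_abs] using key)
  linarith

lemma sigmoid_mono {a b : ℝ} (h : a ≤ b) : _root_.sigmoid a ≤ _root_.sigmoid b := by
  unfold _root_.sigmoid
  have h1 := one_add_exp_pos a
  have h2 := one_add_exp_pos b
  rw [div_le_div_iff₀ h1 h2]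
  have := Real.exp_le_exp.2 (neg_le_neg h)
  linarith

lemma le_sigmoid_iff {p x : ℝ} (hp0 : 0 < p) (hp1 : p < 1) :
    p ≤ _root_.sigmoid x ↔ Real.log (p / (1 - p)) ≤ x := by
  have h1 := one_add_exp_pos x
  have hq : (0:ℝ) < 1 - p := by linarith
  rw [_root_.sigmoid, le_div_iff₀ h1]
  constructor
  · intro h
    have hex : Real.exp (-x) ≤ (1 - p) / p := by
      rw [le_div_iff₀ hp0]; nlinarith
    have := Real.log_le_log (Real.exp_pos _) hex
    rw [Real.log_exp, Real.log_div (ne_of_gt hq) (ne_of_gt hp0)] at this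
    rw [Real.log_div (ne_of_gt hp0) (ne_of_gt hq)]
    linarith
  · intro h
    rw [Real.log_div (ne_of_gt hp0) (ne_of_gt hq)] at h
    have hex : Real.exp (-x) ≤ (1 - p) / p := by
      rw [show (1 - p) / p = Real.exp (Real.log ((1 - p) / p)) by
        rw [Real.exp_log (by positivity)]]
      apply Real.exp_le_exp.2
      rw [Real.log_div (ne_of_gt hq) (ne_of_gt hp0)]
      linarith
    rw [le_div_iff₀ hp0] at hex
    nlinarith

/-- For U uniform on (0,1) and G(α,τ) = σ((α + log U − log(1−U))/τ),
    for every ε ∈ (0,1/2), σ(α) − (τ/4)·log(1/ε) ≤ P(G(α,τ) ≥ 1−ε) ≤ σ(α). -/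
theorem gumbel_upper_tail_bounds (α τ ε : ℝ) (hτ : 0 < τ)
    (hε : ε ∈ Set.Ioo (0:ℝ) (1/2)) :
    ENNReal.ofReal (_root_.sigmoid α - τ / 4 * Real.log (1/ε)) ≤
      (volume.restrict (Set.Ioo (0:ℝ) 1))
        {u : ℝ | 1 - ε ≤ _root_.sigmoid ((α + Real.log u - Real.log (1 - u)) / τ)} ∧
    (volume.restrict (Set.Ioo (0:ℝ) 1))
        {u : ℝ | 1 - ε ≤ _root_.sigmoid ((α + Real.log u - Real.log (1 - u)) / τ)}
      ≤ ENNReal.ofReal (_root_.sigmoid α) := by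
  obtain ⟨hε0, hε2⟩ := hε
  have hε1 : ε < 1 := by linarith
  set L : ℝ := Real.log ((1 - ε) / ε) with hL
  set c : ℝ := Real.exp (τ * L - α) with hc
  have hcpos : 0 < c := Real.exp_pos _
  set t : ℝ := c / (1 + c) with ht
  have ht0 : 0 < t := by positivity
  have ht1 : t < 1 := by
    rw [ht, div_lt_one (by positivity)]; linarith
  -- set equality
  have hset : {u : ℝ | 1 - ε ≤ _root_.sigmoid ((α + Real.log u - Real.log (1 - u)) / τ)}
      ∩ Set.Ioo (0:ℝ) 1 = Set.Ico t 1 := by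
    ext u
    simp only [Set.mem_inter_iff, Set.mem_setOf_eq, Set.mem_Ioo, Set.mem_Ico]
    constructor
    · rintro ⟨h, hu0, hu1⟩
      refine ⟨?_, hu1⟩
      rw [le_sigmoid_iff (by linarith) (by linarith)] at h
      have hL' : L ≤ (α + Real.log u - Real.log (1 - u)) / τ := by
        have he : (1 - (1 - ε)) = ε := by ring
        rwa [he] at h
      have h' : τ * L - α ≤ Real.log u - Real.log (1 - u) := by
        have := (le_div_iff₀ hτ).1 hL'
        linarith
      have hcu : c ≤ u / (1 - u) := by
        have : Real.log u - Real.log (1 - u) = Real.log (u / (1 - u)) := by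
          rw [Real.log_div (ne_of_gt hu0) (by linarith)]
        rw [this] at h'
        calc c = Real.exp (τ * L - α) := rfl
          _ ≤ Real.exp (Real.log (u / (1 - u))) := Real.exp_le_exp.2 h'
          _ = u / (1 - u) := Real.exp_log (by
              have : 0 < 1 - u := by linarith
              positivity)
      rw [ht, div_le_iff₀ (by positivity)]
      rw [le_div_iff₀ (by linarith)] at hcu
      nlinarith
    · rintro ⟨htu, hu1⟩
      have hu0 : 0 < u := lt_of_lt_of_le ht0 htu
      have h1u : 0 < 1 - u := by linarith
      refine ⟨?_, hu0, hu1⟩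
      rw [le_sigmoid_iff (by linarith) (by linarith),
        show (1 - (1 - ε)) = ε by ring, le_div_iff₀ hτ]
      have hcu : c ≤ u / (1 - u) := by
        rw [le_div_iff₀ h1u]
        rw [ht, div_le_iff₀ (by positivity)] at htu
        nlinarith
      have : τ * L - α ≤ Real.log u - Real.log (1 - u) := by
        have he : Real.exp (Real.log u - Real.log (1 - u)) = u / (1 - u) := by
          rw [Real.exp_sub, Real.exp_log hu0, Real.exp_log h1u]
        have h2 : Real.exp (τ * L - α) ≤ Real.exp (Real.log u - Real.log (1 - u)) := by
          rw [he]; exact hcu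
        exact Real.exp_le_exp.1 h2
      linarith
  -- compute the measure
  have hmeas : (volume.restrict (Set.Ioo (0:ℝ) 1))
      {u : ℝ | 1 - ε ≤ _root_.sigmoid ((α + Real.log u - Real.log (1 - u)) / τ)}
      = ENNReal.ofReal (_root_.sigmoid (α - τ * L)) := by
    rw [Measure.restrict_apply' measurableSet_Ioo, hset, Real.volume_Ico]
    congr 1
    rw [_root_.sigmoid]
    have : Real.exp (-(α - τ * L)) = c := by rw [hc]; ring_nf
    rw [this, ht]
    field_simp
    ring
  have hLpos : 0 ≤ L := by
    rw [hL]
    apply Real.log_nonneg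
    rw [le_div_iff₀ hε0]; linarith
  constructor
  · rw [hmeas]
    apply ENNReal.ofReal_le_ofReal
    have hlip := sigmoid_lip (a := α) (b := α - τ * L) (by nlinarith)
    have hLle : L ≤ Real.log (1 / ε) := by
      rw [hL, Real.log_div (by linarith) (ne_of_gt hε0),
        Real.log_div one_ne_zero (ne_of_gt hε0)]
      have : Real.log (1 - ε) ≤ 0 := Real.log_nonpos (by linarith) (by linarith)
      simp only [Real.log_one]
      linarith
    have : τ / 4 * L ≤ τ / 4 * Real.log (1 / ε) :=
      mul_le_mul_of_nonneg_left hLle (by positivity)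
    nlinarith [hlip]
  · rw [hmeas]
    apply ENNReal.ofReal_le_ofReal
    exact sigmoid_mono (by nlinarith)
end

section
/- Let σ(x) = 1/(1+e^{-x}) be the sigmoid function, let α ∈ ℝ, let τ > 0, and let U be uniformly distributed on (0,1). Define G(α,τ) = σ((α + log U − log(1−U))/τ). Then for every ε ∈ (0,1), P(G(α,τ) ≤ ε) = σ(−α − τ·log(1/ε − 1)). -/
open MeasureTheory Real

lemma sigmoid_pos (x : ℝ) : 0 < _root_.sigmoid x := by
  unfold _root_.sigmoid; positivity

lemma sigmoid_lt_one (x : ℝ) : _root_.sigmoid x < 1 := by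
  unfold _root_.sigmoid
  rw [div_lt_one (by positivity)]
  linarith [Real.exp_pos (-x)]

lemma sigmoid_le_sigmoid (x y : ℝ) : _root_.sigmoid x ≤ _root_.sigmoid y ↔ x ≤ y := by
  unfold _root_.sigmoid
  rw [div_le_div_iff₀ (by positivity) (by positivity)]
  constructor
  · intro h
    have h2 : Real.exp (-y) ≤ Real.exp (-x) := by linarith
    have := Real.exp_le_exp.mp h2
    linarith
  · intro h
    have : Real.exp (-y) ≤ Real.exp (-x) := Real.exp_le_exp.mpr (by linarith)
    linarith

lemma sigmoid_eq (c : ℝ) : _root_.sigmoid c = Real.exp c / (1 + Real.exp c) := by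
  unfold _root_.sigmoid
  rw [Real.exp_neg]
  field_simp
  ring

lemma le_sigmoid_iff_s2 {u c : ℝ} (hu : 0 < u) (hu1 : u < 1) :
    u ≤ _root_.sigmoid c ↔ Real.log u - Real.log (1 - u) ≤ c := by
  have h1u : 0 < 1 - u := by linarith
  rw [_root_.sigmoid_eq, ← Real.log_div (ne_of_gt hu) (ne_of_gt h1u)]
  rw [Real.log_le_iff_le_exp (by positivity)]
  rw [div_le_iff₀ h1u, le_div_iff₀ (by positivity : (0:ℝ) < 1 + Real.exp c)]
  constructor <;> intro h <;> nlinarith [Real.exp_pos c]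

/-- For U uniform on (0,1) and G(α,τ) = σ((α + log U − log(1−U))/τ),
    for every ε ∈ (0,1), P(G(α,τ) ≤ ε) = σ(−α − τ·log(1/ε − 1)). -/
theorem gumbel_lower_tail_eq (α τ ε : ℝ) (hτ : 0 < τ) (hε : ε ∈ Set.Ioo (0:ℝ) 1) :
    (volume.restrict (Set.Ioo (0:ℝ) 1))
      {u : ℝ | _root_.sigmoid ((α + Real.log u - Real.log (1 - u)) / τ) ≤ ε}
      = ENNReal.ofReal (_root_.sigmoid (-α - τ * Real.log (1/ε - 1))) := by
  obtain ⟨hε0, hε1⟩ := hε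
  set L : ℝ := -Real.log (1/ε - 1) with hL
  have hεs : ε = _root_.sigmoid L := by
    have hpos : 0 < 1/ε - 1 := by
      rw [sub_pos, lt_div_iff₀ hε0]; linarith
    unfold _root_.sigmoid
    rw [hL, neg_neg, Real.exp_log hpos]
    field_simp
    ring
  set c : ℝ := -α - τ * Real.log (1/ε - 1) with hc
  set t : ℝ := _root_.sigmoid c with ht
  have ht0 : 0 < t := _root_.sigmoid_pos c
  have ht1 : t < 1 := _root_.sigmoid_lt_one c
  have hset : {u : ℝ | _root_.sigmoid ((α + Real.log u - Real.log (1 - u)) / τ) ≤ ε}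
      ∩ Set.Ioo (0:ℝ) 1 = Set.Ioc 0 t := by
    ext u
    simp only [Set.mem_inter_iff, Set.mem_setOf_eq, Set.mem_Ioo, Set.mem_Ioc]
    constructor
    · rintro ⟨h, hu0, hu1⟩
      refine ⟨hu0, ?_⟩
      rw [hεs, _root_.sigmoid_le_sigmoid, div_le_iff₀ hτ] at h
      rw [ht, _root_.le_sigmoid_iff_s2 hu0 hu1]
      rw [hc]; rw [hL] at h; linarith
    · rintro ⟨hu0, hut⟩
      have hu1 : u < 1 := lt_of_le_of_lt hut ht1
      refine ⟨?_, hu0, hu1⟩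
      rw [hεs, _root_.sigmoid_le_sigmoid, div_le_iff₀ hτ]
      rw [ht, _root_.le_sigmoid_iff_s2 hu0 hu1] at hut
      rw [hc] at hut; rw [hL]; linarith
  rw [Measure.restrict_apply' measurableSet_Ioo, hset, Real.volume_Ioc]
  norm_num
end

section
/- Let σ(x) = 1/(1+e^{-x}) be the sigmoid function and let α ∈ ℝ. The Lebesgue measure of the set {u ∈ (0,1) : α + log u − log(1−u) > 0} equals σ(α), and the Lebesgue measure of the set {u ∈ (0,1) : α + log u − log(1−u) < 0} equals 1 − σ(α). Consequently, for U uniform on (0,1), P(lim_{τ→0⁺} G(α,τ) = 1) = σ(α) and P(lim_{τ→0⁺} G(α,τ) = 0) = 1 − σ(α), where G(α,τ) = σ((α + log U − log(1−U))/τ). -/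
open MeasureTheory Real Filter Topology

lemma sig_tendsto_top : Tendsto _root_.sigmoid atTop (𝓝 1) := by
  have h : Tendsto (fun x : ℝ => 1 + Real.exp (-x)) atTop (𝓝 (1 + 0)) :=
    tendsto_const_nhds.add (Real.tendsto_exp_comp_nhds_zero.mpr tendsto_neg_atTop_atBot)
  have := (tendsto_const_nhds (x := (1:ℝ))).div h (by norm_num)
  exact (by simpa [Pi.div_def] using this : Tendsto (fun x : ℝ => 1 / (1 + Real.exp (-x))) atTop (𝓝 1))

lemma sig_tendsto_bot : Tendsto _root_.sigmoid atBot (𝓝 0) := by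
  have h : Tendsto (fun x : ℝ => 1 + Real.exp (-x)) atBot atTop :=
    tendsto_atTop_add_const_left _ 1 (Real.tendsto_exp_atTop.comp tendsto_neg_atBot_atTop)
  have h2 : Tendsto (fun x : ℝ => (1 + Real.exp (-x))⁻¹) atBot (𝓝 0) := h.inv_tendsto_atTop
  have hs : _root_.sigmoid = fun x : ℝ => (1 + Real.exp (-x))⁻¹ := by
    funext x; simp [_root_.sigmoid, one_div]
  rw [hs]; exact h2

lemma div_tendsto_top {c : ℝ} (hc : 0 < c) :
    Tendsto (fun τ : ℝ => c / τ) (𝓝[>] 0) atTop := by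
  simpa [div_eq_mul_inv] using tendsto_inv_nhdsGT_zero.const_mul_atTop hc

lemma tend_one {c : ℝ} (hc : 0 < c) :
    Tendsto (fun τ : ℝ => _root_.sigmoid (c / τ)) (𝓝[>] 0) (𝓝 1) :=
  sig_tendsto_top.comp (div_tendsto_top hc)

lemma tend_zero {c : ℝ} (hc : c < 0) :
    Tendsto (fun τ : ℝ => _root_.sigmoid (c / τ)) (𝓝[>] 0) (𝓝 0) := by
  have h : Tendsto (fun τ : ℝ => c / τ) (𝓝[>] 0) atBot := by
    have h1 := div_tendsto_top (c := -c) (by linarith)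
    have h2 := tendsto_neg_atTop_atBot.comp h1
    have : (fun τ : ℝ => c / τ) = (fun x => -x) ∘ (fun τ : ℝ => -c / τ) := by
      funext τ; simp [neg_div]
    rw [this]; exact h2
  exact sig_tendsto_bot.comp h

lemma cond_pos_iff (α u : ℝ) (hu0 : 0 < u) (hu1 : u < 1) :
    (0 < α + Real.log u - Real.log (1 - u)) ↔ 1 / (1 + Real.exp α) < u := by
  have h1u : 0 < 1 - u := by linarith
  have he : 0 < Real.exp α := Real.exp_pos α
  have hden : (0:ℝ) < 1 + Real.exp α := by linarith
  constructor
  · intro h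
    have hl : Real.log ((1 - u) / u) < α := by
      rw [Real.log_div (ne_of_gt h1u) (ne_of_gt hu0)]; linarith
    have h2 : (1 - u) / u < Real.exp α := (Real.log_lt_iff_lt_exp (div_pos h1u hu0)).mp hl
    rw [div_lt_iff₀ hu0] at h2
    rw [div_lt_iff₀ hden]
    nlinarith
  · intro h
    rw [div_lt_iff₀ hden] at h
    have h2 : (1 - u) / u < Real.exp α := by rw [div_lt_iff₀ hu0]; nlinarith
    have hl : Real.log ((1 - u) / u) < α := (Real.log_lt_iff_lt_exp (div_pos h1u hu0)).mpr h2
    rw [Real.log_div (ne_of_gt h1u) (ne_of_gt hu0)] at hl; linarith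

lemma cond_neg_iff (α u : ℝ) (hu0 : 0 < u) (hu1 : u < 1) :
    (α + Real.log u - Real.log (1 - u) < 0) ↔ u < 1 / (1 + Real.exp α) := by
  have h1u : 0 < 1 - u := by linarith
  have he : 0 < Real.exp α := Real.exp_pos α
  have hden : (0:ℝ) < 1 + Real.exp α := by linarith
  constructor
  · intro h
    have hl : α < Real.log ((1 - u) / u) := by
      rw [Real.log_div (ne_of_gt h1u) (ne_of_gt hu0)]; linarith
    have h2 : Real.exp α < (1 - u) / u := (Real.lt_log_iff_exp_lt (div_pos h1u hu0)).mp hl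
    rw [lt_div_iff₀ hu0] at h2
    rw [lt_div_iff₀ hden]
    nlinarith
  · intro h
    rw [lt_div_iff₀ hden] at h
    have h2 : Real.exp α < (1 - u) / u := by rw [lt_div_iff₀ hu0]; nlinarith
    have hl : α < Real.log ((1 - u) / u) := (Real.lt_log_iff_exp_lt (div_pos h1u hu0)).mpr h2
    rw [Real.log_div (ne_of_gt h1u) (ne_of_gt hu0)] at hl; linarith

lemma one_sub_sig (α : ℝ) : 1 - _root_.sigmoid α = 1 / (1 + Real.exp α) := by
  have h1 : (0:ℝ) < 1 + Real.exp (-α) := by positivity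
  have h2 : (0:ℝ) < 1 + Real.exp α := by positivity
  rw [_root_.sigmoid, Real.exp_neg]
  have he : Real.exp α ≠ 0 := (Real.exp_pos α).ne'
  field_simp
  ring

/-- The Lebesgue measure of {u ∈ (0,1) : α + log u − log(1−u) > 0} is σ(α), that of
    {u ∈ (0,1) : α + log u − log(1−u) < 0} is 1 − σ(α); consequently, for U uniform on
    (0,1), P(lim_{τ→0⁺} G(α,τ) = 1) = σ(α) and P(lim_{τ→0⁺} G(α,τ) = 0) = 1 − σ(α),
    where G(α,τ) = σ((α + log U − log(1−U))/τ). -/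
theorem gumbel_limit_is_bernoulli (α : ℝ) :
    volume {u ∈ Set.Ioo (0:ℝ) 1 | 0 < α + Real.log u - Real.log (1 - u)}
        = ENNReal.ofReal (_root_.sigmoid α) ∧
    volume {u ∈ Set.Ioo (0:ℝ) 1 | α + Real.log u - Real.log (1 - u) < 0}
        = ENNReal.ofReal (1 - _root_.sigmoid α) ∧
    (volume.restrict (Set.Ioo (0:ℝ) 1))
        {u : ℝ | Tendsto (fun τ : ℝ => _root_.sigmoid ((α + Real.log u - Real.log (1 - u)) / τ))
          (𝓝[>] 0) (𝓝 1)} = ENNReal.ofReal (_root_.sigmoid α) ∧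
    (volume.restrict (Set.Ioo (0:ℝ) 1))
        {u : ℝ | Tendsto (fun τ : ℝ => _root_.sigmoid ((α + Real.log u - Real.log (1 - u)) / τ))
          (𝓝[>] 0) (𝓝 0)} = ENNReal.ofReal (1 - _root_.sigmoid α) := by
  set b : ℝ := 1 / (1 + Real.exp α) with hb
  have he : 0 < Real.exp α := Real.exp_pos α
  have hb0 : 0 < b := by positivity
  have hb1 : b < 1 := by
    rw [hb, div_lt_one (by linarith)]; linarith
  have hsb : _root_.sigmoid α = 1 - b := by
    have := one_sub_sig α; linarith
  have hset1 : {u ∈ Set.Ioo (0:ℝ) 1 | 0 < α + Real.log u - Real.log (1 - u)}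
      = Set.Ioo b 1 := by
    ext u
    simp only [Set.mem_setOf_eq, Set.mem_Ioo]
    constructor
    · rintro ⟨⟨hu0, hu1⟩, h⟩
      exact ⟨(cond_pos_iff α u hu0 hu1).mp h, hu1⟩
    · rintro ⟨hbu, hu1⟩
      have hu0 : 0 < u := lt_trans hb0 hbu
      exact ⟨⟨hu0, hu1⟩, (cond_pos_iff α u hu0 hu1).mpr hbu⟩
  have hset2 : {u ∈ Set.Ioo (0:ℝ) 1 | α + Real.log u - Real.log (1 - u) < 0}
      = Set.Ioo 0 b := by
    ext u
    simp only [Set.mem_setOf_eq, Set.mem_Ioo]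
    constructor
    · rintro ⟨⟨hu0, hu1⟩, h⟩
      exact ⟨hu0, (cond_neg_iff α u hu0 hu1).mp h⟩
    · rintro ⟨hu0, hub⟩
      have hu1 : u < 1 := lt_trans hub hb1
      exact ⟨⟨hu0, hu1⟩, (cond_neg_iff α u hu0 hu1).mpr hub⟩
  have hv1 : volume {u ∈ Set.Ioo (0:ℝ) 1 | 0 < α + Real.log u - Real.log (1 - u)}
      = ENNReal.ofReal (_root_.sigmoid α) := by
    rw [hset1, Real.volume_Ioo, hsb]
  have hv2 : volume {u ∈ Set.Ioo (0:ℝ) 1 | α + Real.log u - Real.log (1 - u) < 0}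
      = ENNReal.ofReal (1 - _root_.sigmoid α) := by
    rw [hset2, Real.volume_Ioo, hsb]; ring_nf
  refine ⟨hv1, hv2, ?_, ?_⟩
  · rw [Measure.restrict_apply' measurableSet_Ioo]
    have : {u : ℝ | Tendsto (fun τ : ℝ => _root_.sigmoid ((α + Real.log u - Real.log (1 - u)) / τ))
          (𝓝[>] 0) (𝓝 1)} ∩ Set.Ioo 0 1
        = {u ∈ Set.Ioo (0:ℝ) 1 | 0 < α + Real.log u - Real.log (1 - u)} := by
      ext u
      simp only [Set.mem_inter_iff, Set.mem_setOf_eq, Set.mem_Ioo]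
      constructor
      · rintro ⟨ht, hu0, hu1⟩
        refine ⟨⟨hu0, hu1⟩, ?_⟩
        by_contra hc
        push_neg at hc
        rcases lt_or_eq_of_le hc with hlt | heq
        · exact (by norm_num : (0:ℝ) ≠ 1) (tendsto_nhds_unique (tend_zero hlt) ht)
        · have hconst : Tendsto (fun τ : ℝ =>
              _root_.sigmoid ((α + Real.log u - Real.log (1 - u)) / τ)) (𝓝[>] 0) (𝓝 (_root_.sigmoid 0)) := by
            have heq2 : (fun τ : ℝ => _root_.sigmoid ((α + Real.log u - Real.log (1 - u)) / τ))
                = fun _ : ℝ => _root_.sigmoid 0 := by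
              funext τ; rw [heq, zero_div]
            rw [heq2]; exact tendsto_const_nhds
          have := tendsto_nhds_unique hconst ht
          rw [_root_.sigmoid] at this
          norm_num at this
      · rintro ⟨⟨hu0, hu1⟩, h⟩
        exact ⟨tend_one h, hu0, hu1⟩
    rw [this, hv1]
  · rw [Measure.restrict_apply' measurableSet_Ioo]
    have : {u : ℝ | Tendsto (fun τ : ℝ => _root_.sigmoid ((α + Real.log u - Real.log (1 - u)) / τ))
          (𝓝[>] 0) (𝓝 0)} ∩ Set.Ioo 0 1
        = {u ∈ Set.Ioo (0:ℝ) 1 | α + Real.log u - Real.log (1 - u) < 0} := by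
      ext u
      simp only [Set.mem_inter_iff, Set.mem_setOf_eq, Set.mem_Ioo]
      constructor
      · rintro ⟨ht, hu0, hu1⟩
        refine ⟨⟨hu0, hu1⟩, ?_⟩
        by_contra hc
        push_neg at hc
        rcases lt_or_eq_of_le hc with hlt | heq
        · exact (by norm_num : (1:ℝ) ≠ 0) (tendsto_nhds_unique (tend_one hlt) ht)
        · have hconst : Tendsto (fun τ : ℝ =>
              _root_.sigmoid ((α + Real.log u - Real.log (1 - u)) / τ)) (𝓝[>] 0) (𝓝 (_root_.sigmoid 0)) := by
            have heq2 : (fun τ : ℝ => _root_.sigmoid ((α + Real.log u - Real.log (1 - u)) / τ))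
                = fun _ : ℝ => _root_.sigmoid 0 := by
              funext τ; rw [← heq, zero_div]
            rw [heq2]; exact tendsto_const_nhds
          have := tendsto_nhds_unique hconst ht
          rw [_root_.sigmoid] at this
          norm_num at this
      · rintro ⟨⟨hu0, hu1⟩, h⟩
        exact ⟨tend_zero h, hu0, hu1⟩
    rw [this, hv2]
end
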